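/- Let k ∈ ℤ, m ≥ 0, B₀ > 0 and σ ∈ {+1, −1}. Suppose φ, ψ ∈ C¹((0,∞);ℂ) are square-integrable with respect to the measure r dr on (0,∞) and satisfy the system i(ψ′(r) + ((k+1)/r)ψ(r) − (B₀/2)rψ(r)) = (σi − m)φ(r) and i(φ′(r) − (k/r)φ(r) + (B₀/2)rφ(r)) = (σi + m)ψ(r) for all r > 0. Then φ ≡ 0 and ψ ≡ 0. (Equivalently, the deficiency spaces N_± = ker(d_k^* ∓ i) of the radial Dirac operator d_k are trivial, so d_k is essentially self-adjoint.) -/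

import Mathlib

open MeasureTheory Real Set

private lemma mono_of_deriv_Ioc {f f' : ℝ → ℝ} {a b : ℝ} (ha : 0 ≤ a)
    (hd : ∀ r : ℝ, 0 < r → HasDerivAt f (f' r) r)
    (hnn : ∀ r : ℝ, a < r → r < b → 0 ≤ f' r) :
    MonotoneOn f (Set.Ioc a b) := by
  apply monotoneOn_of_deriv_nonneg (convex_Ioc a b)
  · intro x hx
    exact (hd x (lt_of_le_of_lt ha hx.1)).continuousAt.continuousWithinAt
  · rw [interior_Ioc]
    intro x hx
    exact (hd x (lt_of_le_of_lt ha hx.1)).differentiableAt.differentiableWithinAt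
  · rw [interior_Ioc]
    intro x hx
    rw [(hd x (lt_of_le_of_lt ha hx.1)).deriv]
    exact hnn x hx.1 hx.2

private lemma mono_of_deriv_Ioi {f f' : ℝ → ℝ}
    (hd : ∀ r : ℝ, 0 < r → HasDerivAt f (f' r) r)
    (hnn : ∀ r : ℝ, 0 < r → 0 ≤ f' r) :
    MonotoneOn f (Set.Ioi 0) := by
  apply monotoneOn_of_deriv_nonneg (convex_Ioi 0)
  · intro x hx
    exact (hd x hx).continuousAt.continuousWithinAt
  · rw [interior_Ioi]
    intro x hx
    exact (hd x hx).differentiableAt.differentiableWithinAt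
  · rw [interior_Ioi]
    intro x hx
    rw [(hd x hx).deriv]
    exact hnn x hx

private lemma aux_nonpos {G P : ℝ → ℝ}
    (hPG : ∀ r : ℝ, 0 < r → |P r| ≤ G r)
    (hd : ∀ r : ℝ, 0 < r → HasDerivAt P (2 * G r) r)
    (hint : IntegrableOn G (Set.Ioi 0) volume) :
    ∀ r : ℝ, 0 < r → P r ≤ 0 := by
  intro r₀ hr₀
  by_contra hpos
  push_neg at hpos
  have hG0 : ∀ r : ℝ, 0 < r → 0 ≤ G r := fun r hr => (abs_nonneg _).trans (hPG r hr)
  have hmono : MonotoneOn P (Set.Ioi 0) :=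
    mono_of_deriv_Ioi hd (fun r hr => by nlinarith [hG0 r hr])
  have hlow : ∀ r : ℝ, r₀ ≤ r → P r₀ ≤ G r := by
    intro r hr
    have hrpos : 0 < r := lt_of_lt_of_le hr₀ hr
    have h := hmono (mem_Ioi.2 hr₀) (mem_Ioi.2 hrpos) hr
    exact le_trans (le_trans h (le_abs_self _)) (hPG r hrpos)
  have hint' : Integrable G (volume.restrict (Set.Ioi r₀)) :=
    hint.mono_set (Ioi_subset_Ioi hr₀.le)
  have hlt := hint'.measure_ge_lt_top hpos
  have hsub : Set.Ioi r₀ ⊆ {x | P r₀ ≤ G x} := fun x hx => hlow x (le_of_lt hx)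
  have hge : (volume.restrict (Set.Ioi r₀)) (Set.Ioi r₀) ≤
      (volume.restrict (Set.Ioi r₀)) {x | P r₀ ≤ G x} := measure_mono hsub
  rw [Measure.restrict_apply measurableSet_Ioi, Set.inter_self, Real.volume_Ioi] at hge
  exact absurd (lt_of_le_of_lt hge hlt) (by simp)

private lemma aux_no_conc {G Hf : ℝ → ℝ} {ν e c r₀ : ℝ} (hν : 1 ≤ ν) (hc : 0 < c)
    (hr₀ : 0 < r₀)
    (hbd : ∀ r : ℝ, 0 < r → |Hf r| ≤ G r)
    (hd : ∀ r : ℝ, 0 < r → HasDerivAt Hf ((ν - e * r ^ 2) / r * G r) r)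
    (hint : IntegrableOn G (Set.Ioc 0 r₀) volume)
    (hcG : ∀ r : ℝ, 0 < r → r ≤ r₀ → c ≤ G r) : False := by
  have hνpos : (0:ℝ) < ν := lt_of_lt_of_le one_pos hν
  set a : ℝ := ν / (2 * (|e| + 1)) with ha
  have hapos : 0 < a := by positivity
  set r₁ : ℝ := min r₀ (min 1 (Real.sqrt a)) with hr₁
  have hr₁pos : 0 < r₁ := lt_min hr₀ (lt_min one_pos (Real.sqrt_pos.2 hapos))
  have hr₁r₀ : r₁ ≤ r₀ := min_le_left _ _
  have hr₁1 : r₁ ≤ 1 := le_trans (min_le_right _ _) (min_le_left _ _)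
  have hhalf : ∀ r : ℝ, 0 < r → r ≤ r₁ → 1/2 ≤ ν - e * r ^ 2 := by
    intro r hr hrle
    have h1 : r ≤ Real.sqrt a := le_trans hrle (le_trans (min_le_right _ _) (min_le_right _ _))
    have h2 : r ^ 2 ≤ Real.sqrt a ^ 2 := by nlinarith [Real.sqrt_nonneg a]
    rw [Real.sq_sqrt hapos.le] at h2
    have h3 : e * r ^ 2 ≤ |e| * r ^ 2 := by nlinarith [le_abs_self e, sq_nonneg r]
    have h4 : |e| * r ^ 2 ≤ |e| * a := by nlinarith [abs_nonneg e]
    have h5 : |e| * a ≤ ν / 2 := by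
      rw [ha, mul_div_assoc']
      rw [div_le_div_iff₀ (by positivity) (by norm_num : (0:ℝ) < 2)]
      nlinarith [abs_nonneg e]
    linarith
  -- Part (i) : find r₂ with Hf r₂ < 0
  have hex : ∃ r₂ : ℝ, 0 < r₂ ∧ r₂ ≤ r₁ ∧ Hf r₂ < 0 := by
    by_contra hno
    push_neg at hno
    set Q : ℝ → ℝ := fun t => Hf t - c / 2 * Real.log t with hQ
    have hQd : ∀ t : ℝ, 0 < t →
        HasDerivAt Q ((ν - e * t ^ 2) / t * G t - c / 2 * t⁻¹) t := by
      intro t ht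
      exact (hd t ht).sub ((Real.hasDerivAt_log ht.ne').const_mul (c / 2))
    have hQmono : MonotoneOn Q (Set.Ioc 0 r₁) := by
      apply mono_of_deriv_Ioc le_rfl hQd
      intro t ht htb
      have h1 := hhalf t ht htb.le
      have h2 := hcG t ht (le_trans htb.le hr₁r₀)
      have hu : (0:ℝ) < t⁻¹ := by positivity
      have key : c * (1/2) ≤ (ν - e * t ^ 2) * G t := by nlinarith
      have : (ν - e * t ^ 2) / t * G t = ((ν - e * t ^ 2) * G t) * t⁻¹ := by
        field_simp
      rw [this]
      nlinarith
    set r₃ : ℝ := min r₁ (Real.exp (-(2 / c) * (|Q r₁| + 1))) with hr₃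
    have hr₃pos : 0 < r₃ := lt_min hr₁pos (Real.exp_pos _)
    have hr₃le : r₃ ≤ r₁ := min_le_left _ _
    have hQle : Q r₃ ≤ Q r₁ := hQmono ⟨hr₃pos, hr₃le⟩ ⟨hr₁pos, le_rfl⟩ hr₃le
    have hlog : Real.log r₃ ≤ -(2 / c) * (|Q r₁| + 1) := by
      calc Real.log r₃ ≤ Real.log (Real.exp (-(2 / c) * (|Q r₁| + 1))) :=
            Real.log_le_log hr₃pos (min_le_right _ _)
        _ = -(2 / c) * (|Q r₁| + 1) := Real.log_exp _
    have hH3 : 0 ≤ Hf r₃ := hno r₃ hr₃pos hr₃le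
    have hQval : Hf r₃ = Q r₃ + c / 2 * Real.log r₃ := by
      simp only [hQ]; ring
    have hmul : c / 2 * Real.log r₃ ≤ -(|Q r₁| + 1) := by
      have := mul_le_mul_of_nonneg_left hlog (by positivity : (0:ℝ) ≤ c / 2)
      have heq : c / 2 * (-(2 / c) * (|Q r₁| + 1)) = -(|Q r₁| + 1) := by
        field_simp
      linarith
    have habs := le_abs_self (Q r₁)
    clear_value Q r₃
    linarith [hQle, hQval, hmul, habs, hH3]
  obtain ⟨r₂, hr₂pos, hr₂le, hH2⟩ := hex
  -- Part (ii)
  set μf : ℝ → ℝ := fun t => t ^ ν * Real.exp (-e * t ^ 2 / 2) with hμf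
  have hμpos : ∀ t : ℝ, 0 < t → 0 < μf t := fun t ht =>
    mul_pos (Real.rpow_pos_of_pos ht ν) (Real.exp_pos _)
  have hμd : ∀ t : ℝ, 0 < t → HasDerivAt μf ((ν - e * t ^ 2) / t * μf t) t := by
    intro t ht
    have h1 : HasDerivAt (fun x : ℝ => x ^ ν) (ν * t ^ (ν - 1)) t :=
      Real.hasDerivAt_rpow_const (Or.inl ht.ne')
    have hinner : HasDerivAt (fun x : ℝ => -e * x ^ 2 / 2) (-e * (2 * t ^ 1) / 2) t :=
      (((hasDerivAt_pow 2 t).const_mul (-e)).div_const 2)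
    have h2 := hinner.exp
    have h3 := h1.mul h2
    refine h3.congr_deriv ?_
    symm
    rw [Real.rpow_sub ht, Real.rpow_one]
    simp only [hμf]
    field_simp
    ring
  set R : ℝ → ℝ := fun t => μf t * Hf t with hR
  have hRd : ∀ t : ℝ, 0 < t → HasDerivAt R
      ((ν - e * t ^ 2) / t * μf t * Hf t + μf t * ((ν - e * t ^ 2) / t * G t)) t := by
    intro t ht
    exact (hμd t ht).mul (hd t ht)
  have hRmono : MonotoneOn R (Set.Ioc 0 r₂) := by
    apply mono_of_deriv_Ioc le_rfl hRd
    intro t ht htb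
    have h1 := hhalf t ht (le_trans htb.le hr₂le)
    have hsum : 0 ≤ Hf t + G t := by
      have := hbd t ht
      have := neg_abs_le (Hf t)
      linarith
    have hμ := hμpos t ht
    have hdiv : 0 ≤ (ν - e * t ^ 2) / t := by positivity
    nlinarith [mul_nonneg (mul_nonneg hdiv hμ.le) hsum]
  set b : ℝ := -(μf r₂ * Hf r₂) with hb
  have hbpos : 0 < b := by
    have := hμpos r₂ hr₂pos
    rw [hb]
    nlinarith
  set K : ℝ := Real.exp (|e| / 2) with hK
  have hKpos : 0 < K := Real.exp_pos _
  have hμle : ∀ r : ℝ, 0 < r → r ≤ r₂ → μf r ≤ K * r := by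
    intro r hr hrle
    have hr1 : r ≤ 1 := le_trans hrle (le_trans hr₂le hr₁1)
    have h1 : r ^ ν ≤ r ^ (1:ℝ) := Real.rpow_le_rpow_of_exponent_ge hr hr1 hν
    rw [Real.rpow_one] at h1
    have h2 : Real.exp (-e * r ^ 2 / 2) ≤ K := by
      rw [hK, Real.exp_le_exp]
      have he : -e ≤ |e| := by rw [← abs_neg]; exact le_abs_self _
      have hrr : r ^ 2 ≤ 1 := by nlinarith
      have f1 := mul_le_mul_of_nonneg_right he (sq_nonneg r)
      have f2 := mul_le_mul_of_nonneg_left hrr (abs_nonneg e)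
      linarith
    have h3 : 0 ≤ r ^ ν := (Real.rpow_pos_of_pos hr ν).le
    calc μf r = r ^ ν * Real.exp (-e * r ^ 2 / 2) := rfl
      _ ≤ r * K := mul_le_mul h1 h2 (Real.exp_pos _).le hr.le
      _ = K * r := mul_comm _ _
  have hGlow : ∀ r : ℝ, 0 < r → r ≤ r₂ → b / K * r⁻¹ ≤ G r := by
    intro r hr hrle
    have hμ := hμpos r hr
    have hRle : R r ≤ R r₂ := hRmono ⟨hr, hrle⟩ ⟨hr₂pos, le_rfl⟩ hrle
    have h1 : μf r * Hf r ≤ -b := by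
      have : R r₂ = -b := by rw [hb]; ring
      rw [← this]; exact hRle
    have h2 : b / μf r ≤ -Hf r := by
      rw [div_le_iff₀ hμ]; nlinarith
    have h3 : b / (K * r) ≤ b / μf r :=
      div_le_div_of_nonneg_left hbpos.le hμ (hμle r hr hrle)
    have h4 := hbd r hr
    have h5 : b / (K * r) = b / K * r⁻¹ := by
      rw [div_mul_eq_div_div, div_eq_mul_inv]
    have h6 := neg_abs_le (Hf r)
    linarith
  have hint2 : IntegrableOn G (Set.Ioc 0 r₂) volume :=
    hint.mono_set (Set.Ioc_subset_Ioc_right (le_trans hr₂le hr₁r₀))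
  have hmeas : AEStronglyMeasurable (fun r : ℝ => b / K * r⁻¹)
      (volume.restrict (Set.Ioc 0 r₂)) :=
    (measurable_inv.const_mul (b / K)).aestronglyMeasurable
  have hbound : ∀ᵐ r ∂(volume.restrict (Set.Ioc 0 r₂)), ‖b / K * r⁻¹‖ ≤ G r := by
    rw [ae_restrict_iff' measurableSet_Ioc]
    apply ae_of_all
    intro r hr
    rw [Real.norm_eq_abs, abs_of_nonneg (mul_nonneg (div_nonneg hbpos.le hKpos.le)
      (inv_nonneg.2 hr.1.le))]
    exact hGlow r hr.1 hr.2
  have hii : IntegrableOn (fun r : ℝ => b / K * r⁻¹) (Set.Ioc 0 r₂) volume :=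
    Integrable.mono' hint2 hmeas hbound
  have hii2 : IntegrableOn (fun r : ℝ => r⁻¹) (Set.Ioc 0 r₂) volume := by
    have h := hii.const_mul (K / b)
    have heq : (fun r : ℝ => K / b * (b / K * r⁻¹)) = fun r : ℝ => r⁻¹ := by
      funext r
      field_simp
    rwa [heq] at h
  have hIV : IntervalIntegrable (fun x : ℝ => x⁻¹) volume 0 r₂ := by
    rw [intervalIntegrable_iff_integrableOn_Ioc_of_le hr₂pos.le]
    exact hii2
  rcases intervalIntegrable_inv_iff.mp hIV with h | h
  · exact absurd h hr₂pos.ne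
  · exact h Set.left_mem_uIcc

private lemma conj_self_c (z : ℂ) : z * star z = ((‖z‖ : ℂ)) ^ 2 := by
  rw [← starRingEnd_apply, Complex.mul_conj, Complex.normSq_eq_norm_sq]
  push_cast
  ring

private lemma conj_self_re (z : ℂ) : (z * star z).re = ‖z‖ ^ 2 := by
  rw [conj_self_c]
  rw [← Complex.ofReal_pow, Complex.ofReal_re]

private lemma re_abs_le (z w : ℂ) : |(z * star w).re| ≤ ‖z‖ * ‖w‖ := by
  calc |(z * star w).re| ≤ ‖z * star w‖ := Complex.abs_re_le_norm _
    _ = ‖z * star w‖ := rfl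
    _ = ‖z‖ * ‖w‖ := by rw [norm_mul, norm_star]

/-- **Triviality of the deficiency spaces of the radial Dirac operator** (essential
self-adjointness).  Let `k ∈ ℤ`, `m ≥ 0`, `B₀ > 0` and `σ ∈ {+1,−1}`.  If `φ, ψ ∈ C¹((0,∞);ℂ)`
are square-integrable for the measure `r dr` on `(0,∞)` and satisfy
`i(ψ′ + ((k+1)/r)ψ − (B₀/2)rψ) = (σi − m)φ` and `i(φ′ − (k/r)φ + (B₀/2)rφ) = (σi + m)ψ`
for all `r > 0`, then `φ ≡ 0` and `ψ ≡ 0` on `(0,∞)`. -/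
theorem radial_dirac_deficiency_trivial (k : ℤ) (m B₀ σ : ℝ) (hm : 0 ≤ m) (hB : 0 < B₀)
    (hσ : σ = 1 ∨ σ = -1)
    (φ ψ : ℝ → ℂ) (hφ : ContDiffOn ℝ 1 φ (Set.Ioi 0)) (hψ : ContDiffOn ℝ 1 ψ (Set.Ioi 0))
    (hφL2 : IntegrableOn (fun r : ℝ => ‖φ r‖ ^ 2 * r) (Set.Ioi 0) volume)
    (hψL2 : IntegrableOn (fun r : ℝ => ‖ψ r‖ ^ 2 * r) (Set.Ioi 0) volume)
    (h1 : ∀ r : ℝ, 0 < r →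
      Complex.I * (deriv ψ r + (((k : ℂ) + 1) / (r : ℂ)) * ψ r -
          ((B₀ / 2 : ℝ) : ℂ) * (r : ℂ) * ψ r) = ((σ : ℂ) * Complex.I - (m : ℂ)) * φ r)
    (h2 : ∀ r : ℝ, 0 < r →
      Complex.I * (deriv φ r - ((k : ℂ) / (r : ℂ)) * φ r +
          ((B₀ / 2 : ℝ) : ℂ) * (r : ℂ) * φ r) = ((σ : ℂ) * Complex.I + (m : ℂ)) * ψ r) :
    ∀ r : ℝ, 0 < r → φ r = 0 ∧ ψ r = 0 := by
  have hσ2 : σ * σ = 1 := by rcases hσ with h | h <;> rw [h] <;> norm_num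
  have hφD : ∀ r : ℝ, 0 < r → HasDerivAt φ (deriv φ r) r := fun r hr =>
    ((hφ.contDiffAt (Ioi_mem_nhds hr)).differentiableAt one_ne_zero).hasDerivAt
  have hψD : ∀ r : ℝ, 0 < r → HasDerivAt ψ (deriv ψ r) r := fun r hr =>
    ((hψ.contDiffAt (Ioi_mem_nhds hr)).differentiableAt one_ne_zero).hasDerivAt
  have Eφ : ∀ r : ℝ, 0 < r → deriv φ r = ((k:ℂ)/(r:ℂ)) * φ r - ((B₀/2:ℝ):ℂ)*(r:ℂ)*φ r
      + ((σ:ℂ) - (m:ℂ)*Complex.I) * ψ r := by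
    intro r hr
    have hI := Complex.I_mul_I
    linear_combination (-Complex.I) * h2 r hr +
      ((deriv φ r - ((k:ℂ)/(r:ℂ)) * φ r + ((B₀/2:ℝ):ℂ)*(r:ℂ)*φ r) - (σ:ℂ)*ψ r) * hI
  have Eψ : ∀ r : ℝ, 0 < r → deriv ψ r = -(((k:ℂ)+1)/(r:ℂ)) * ψ r + ((B₀/2:ℝ):ℂ)*(r:ℂ)*ψ r
      + ((σ:ℂ) + (m:ℂ)*Complex.I) * φ r := by
    intro r hr
    have hI := Complex.I_mul_I
    linear_combination (-Complex.I) * h1 r hr +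
      ((deriv ψ r + (((k:ℂ)+1)/(r:ℂ)) * ψ r - ((B₀/2:ℝ):ℂ)*(r:ℂ)*ψ r) - (σ:ℂ)*φ r) * hI
  set Gf : ℝ → ℝ := fun t => t * (‖φ t‖^2 + ‖ψ t‖^2) with hGf
  set Pf : ℝ → ℝ := fun t => σ * 2 * t * (φ t * star (ψ t)).re with hPf
  set s : ℝ := if 0 ≤ k then 1 else -1 with hs
  set Hf : ℝ → ℝ := fun t => s * t * ((φ t * star (φ t)).re - (ψ t * star (ψ t)).re) with hHf
  set ν : ℝ := s * (2*(k:ℝ)+1) with hν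
  set e : ℝ := s * B₀ with he
  have hsabs : |s| = 1 := by rw [hs]; split <;> norm_num
  have hσabs : |σ| = 1 := by rcases hσ with h | h <;> rw [h] <;> norm_num
  have hν1 : 1 ≤ ν := by
    rw [hν, hs]
    split
    · rename_i h0
      have : (0:ℝ) ≤ (k:ℝ) := by exact_mod_cast h0
      linarith
    · rename_i h0
      push_neg at h0
      have hk1 : k ≤ -1 := by omega
      have : (k:ℝ) ≤ -1 := by exact_mod_cast hk1
      linarith
  have hG0 : ∀ r : ℝ, 0 < r → 0 ≤ Gf r := by
    intro r hr
    rw [hGf]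
    positivity
  have hGint : IntegrableOn Gf (Set.Ioi 0) volume := by
    refine (hφL2.add hψL2).congr (Filter.Eventually.of_forall fun t => ?_)
    simp only [Pi.add_apply, hGf]
    ring
  have hPbd : ∀ r : ℝ, 0 < r → |Pf r| ≤ Gf r := by
    intro r hr
    simp only [hPf, hGf]
    have h1 := re_abs_le (φ r) (ψ r)
    have habs : |σ * 2 * r * (φ r * star (ψ r)).re| = 2 * r * |(φ r * star (ψ r)).re| := by
      rw [abs_mul, abs_mul, abs_mul, hσabs, abs_of_nonneg (by norm_num : (0:ℝ) ≤ 2),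
        abs_of_nonneg hr.le]
      ring
    rw [habs]
    nlinarith [sq_nonneg (‖φ r‖ - ‖ψ r‖), abs_nonneg ((φ r * star (ψ r)).re), hr.le,
      mul_le_mul_of_nonneg_left h1 (by positivity : (0:ℝ) ≤ 2 * r),
      sq_nonneg (‖φ r‖ + ‖ψ r‖)]
  have hHbd : ∀ r : ℝ, 0 < r → |Hf r| ≤ Gf r := by
    intro r hr
    simp only [hHf, hGf, conj_self_re]
    have habs : |s * r * (‖φ r‖^2 - ‖ψ r‖^2)| = r * |‖φ r‖^2 - ‖ψ r‖^2| := by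
      rw [abs_mul, abs_mul, hsabs, abs_of_nonneg hr.le]
      ring
    rw [habs]
    have h2 : |‖φ r‖^2 - ‖ψ r‖^2| ≤ ‖φ r‖^2 + ‖ψ r‖^2 := by
      rw [abs_le]
      constructor <;> nlinarith [sq_nonneg ‖φ r‖, sq_nonneg ‖ψ r‖]
    nlinarith [hr.le]
  have hPd : ∀ r : ℝ, 0 < r → HasDerivAt Pf (2 * Gf r) r := by
    intro r hr
    have hrne : r ≠ 0 := hr.ne'
    have hst : HasDerivAt (fun t => star (ψ t)) (star (deriv ψ r)) r := (hψD r hr).star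
    have hmulC : HasDerivAt (fun t => φ t * star (ψ t))
        (deriv φ r * star (ψ r) + φ r * star (deriv ψ r)) r := (hφD r hr).mul hst
    have hre : HasDerivAt (fun t => (φ t * star (ψ t)).re)
        ((deriv φ r * star (ψ r) + φ r * star (deriv ψ r)).re) r :=
      Complex.reCLM.hasFDerivAt.comp_hasDerivAt r hmulC.hasFDerivAt
    have hlin : HasDerivAt (fun t : ℝ => σ * 2 * t) (σ * 2) r := by
      simpa using (hasDerivAt_id r).const_mul (σ * 2)
    have hall := hlin.mul hre
    have hφc : φ r * (starRingEnd ℂ) (φ r) = ((‖φ r‖:ℂ))^2 := by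
      rw [starRingEnd_apply]; exact conj_self_c (φ r)
    have hψc : ψ r * (starRingEnd ℂ) (ψ r) = ((‖ψ r‖:ℂ))^2 := by
      rw [starRingEnd_apply]; exact conj_self_c (ψ r)
    have hv : deriv φ r * star (ψ r) + φ r * star (deriv ψ r)
        = ((-(r⁻¹) : ℝ) : ℂ) * (φ r * star (ψ r))
          + ((σ:ℂ) - (m:ℂ)*Complex.I) * ((‖φ r‖:ℂ)^2 + (‖ψ r‖:ℂ)^2) := by
      rw [Eφ r hr, Eψ r hr]
      simp only [Complex.star_def, map_add, map_sub, map_neg, map_mul, map_div₀, map_one,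
        map_intCast, Complex.conj_ofReal, Complex.conj_I]
      push_cast
      linear_combination ((σ:ℂ) - (m:ℂ)*Complex.I) * hφc + ((σ:ℂ) - (m:ℂ)*Complex.I) * hψc
    have hre2 : (((-(r⁻¹):ℝ):ℂ) * (φ r * star (ψ r))
        + ((σ:ℂ) - (m:ℂ)*Complex.I) * ((‖φ r‖:ℂ)^2 + (‖ψ r‖:ℂ)^2)).re
        = -(r⁻¹) * (φ r * star (ψ r)).re + σ * (‖φ r‖^2 + ‖ψ r‖^2) := by
      simp only [Complex.add_re, Complex.mul_re, Complex.sub_re, Complex.sub_im,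
        Complex.mul_im, Complex.I_re, Complex.I_im, Complex.ofReal_re, Complex.ofReal_im,
        Complex.add_im, ← Complex.ofReal_pow]
      ring
    refine hall.congr_deriv ?_
    symm
    rw [hv, hre2]
    have hGfr : Gf r = r * (‖φ r‖^2 + ‖ψ r‖^2) := rfl
    rw [hGfr]
    have hrr : r * r⁻¹ = 1 := mul_inv_cancel₀ hrne
    linear_combination (-(2*r*(‖φ r‖^2 + ‖ψ r‖^2))) * hσ2 +
      (2*σ*((φ r * star (ψ r)).re)) * hrr
  have hHd : ∀ r : ℝ, 0 < r → HasDerivAt Hf ((ν - e * r^2)/r * Gf r) r := by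
    intro r hr
    have hrne : r ≠ 0 := hr.ne'
    have hmφ : HasDerivAt (fun t => (φ t * star (φ t)).re)
        ((deriv φ r * star (φ r) + φ r * star (deriv φ r)).re) r :=
      Complex.reCLM.hasFDerivAt.comp_hasDerivAt r
        (((hφD r hr).mul (hφD r hr).star).hasFDerivAt)
    have hmψ : HasDerivAt (fun t => (ψ t * star (ψ t)).re)
        ((deriv ψ r * star (ψ r) + ψ r * star (deriv ψ r)).re) r :=
      Complex.reCLM.hasFDerivAt.comp_hasDerivAt r
        (((hψD r hr).mul (hψD r hr).star).hasFDerivAt)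
    have hlin : HasDerivAt (fun t : ℝ => s * t) s r := by
      simpa using (hasDerivAt_id r).const_mul s
    have hall := hlin.mul (hmφ.sub hmψ)
    have hφc : φ r * (starRingEnd ℂ) (φ r) = ((‖φ r‖:ℂ))^2 := by
      rw [starRingEnd_apply]; exact conj_self_c (φ r)
    have hψc : ψ r * (starRingEnd ℂ) (ψ r) = ((‖ψ r‖:ℂ))^2 := by
      rw [starRingEnd_apply]; exact conj_self_c (ψ r)
    have hvφ : deriv φ r * star (φ r) + φ r * star (deriv φ r)
        - (deriv ψ r * star (ψ r) + ψ r * star (deriv ψ r))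
        = ((2*(k:ℝ)/r - B₀*r : ℝ) : ℂ) * (‖φ r‖:ℂ)^2
          + ((2*((k:ℝ)+1)/r - B₀*r : ℝ) : ℂ) * (‖ψ r‖:ℂ)^2 := by
      rw [Eφ r hr, Eψ r hr]
      simp only [Complex.star_def, map_add, map_sub, map_neg, map_mul, map_div₀, map_one,
        map_intCast, Complex.conj_ofReal, Complex.conj_I]
      push_cast
      linear_combination (2*(k:ℂ)/(r:ℂ) - (B₀:ℂ)*(r:ℂ)) * hφc +
        (2*((k:ℂ)+1)/(r:ℂ) - (B₀:ℂ)*(r:ℂ)) * hψc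
    refine hall.congr_deriv ?_
    symm
    simp only [Pi.sub_apply]
    rw [conj_self_re, conj_self_re, ← Complex.sub_re, hvφ]
    have hre3 : (((2*(k:ℝ)/r - B₀*r : ℝ) : ℂ) * (‖φ r‖:ℂ)^2
        + ((2*((k:ℝ)+1)/r - B₀*r : ℝ) : ℂ) * (‖ψ r‖:ℂ)^2).re
        = (2*(k:ℝ)/r - B₀*r) * ‖φ r‖^2 + (2*((k:ℝ)+1)/r - B₀*r) * ‖ψ r‖^2 := by
      simp only [Complex.add_re, Complex.mul_re, Complex.mul_im, Complex.ofReal_re,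
        Complex.ofReal_im, ← Complex.ofReal_pow]
      ring
    rw [hre3]
    have hGfr : Gf r = r * (‖φ r‖^2 + ‖ψ r‖^2) := rfl
    rw [hGfr, hν, he]
    field_simp
    ring
  have hP_nonpos := aux_nonpos hPbd hPd hGint
  have hPmono : MonotoneOn Pf (Set.Ioi 0) :=
    mono_of_deriv_Ioi hPd (fun r hr => by have := hG0 r hr; linarith)
  have hP_nonneg : ∀ r : ℝ, 0 < r → 0 ≤ Pf r := by
    intro r₀ hr₀
    by_contra hneg
    push_neg at hneg
    refine aux_no_conc (ν := ν) (e := e) hν1 (by linarith : (0:ℝ) < -Pf r₀) hr₀ hHbd hHd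
      (hGint.mono_set Set.Ioc_subset_Ioi_self) ?_
    intro r hr hrle
    have hle : Pf r ≤ Pf r₀ := hPmono (mem_Ioi.2 hr) (mem_Ioi.2 hr₀) hrle
    have h2 := hPbd r hr
    have h3 := neg_abs_le (Pf r)
    linarith
  intro r hr
  have hev : Pf =ᶠ[nhds r] fun _ => (0:ℝ) := by
    filter_upwards [Ioi_mem_nhds hr] with t ht
    exact le_antisymm (hP_nonpos t ht) (hP_nonneg t ht)
  have hzero : HasDerivAt Pf (0:ℝ) r := (hasDerivAt_const r (0:ℝ)).congr_of_eventuallyEq hev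
  have h2G : 2 * Gf r = 0 := (hPd r hr).unique hzero
  have hGfr : Gf r = r * (‖φ r‖^2 + ‖ψ r‖^2) := rfl
  rw [hGfr] at h2G
  have hS : ‖φ r‖^2 + ‖ψ r‖^2 = 0 := by
    nlinarith [sq_nonneg ‖φ r‖, sq_nonneg ‖ψ r‖]
  have hφ0 : ‖φ r‖^2 = 0 := by nlinarith [sq_nonneg ‖ψ r‖, sq_nonneg ‖φ r‖]
  have hψ0 : ‖ψ r‖^2 = 0 := by nlinarith [sq_nonneg ‖ψ r‖, sq_nonneg ‖φ r‖]
  constructor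
  · exact norm_eq_zero.mp ((pow_eq_zero_iff (by norm_num : (2:ℕ) ≠ 0)).mp hφ0)
  · exact norm_eq_zero.mp ((pow_eq_zero_iff (by norm_num : (2:ℕ) ≠ 0)).mp hψ0)
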